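/- Let k ≥ 1 and let P, Q : ℝ² × ℝ² → ℝᵏ be bilinear maps that are symmetric (P(ζ,η) = P(η,ζ) for all ζ, η), tracefree (P(e₁,e₁) + P(e₂,e₂) = 0, where e₁, e₂ is the standard basis of ℝ²), and both nonzero, and likewise for Q. Then there exist S ∈ SO(2) and T ∈ O(k) such that ⟨P_{S,T}, Q⟩ > 0, where P_{S,T}(ζ,η) := T·P(S⁻¹ζ, S⁻¹η) and ⟨P_{S,T}, Q⟩ := Σ_{i,j=1,2} ⟨P_{S,T}(e_i,e_j), Q(e_i,e_j)⟩_{ℝᵏ}. -/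

import Mathlib

open Matrix

section aux

private def sgnPerm {k : ℕ} (π : Equiv.Perm (Fin k)) (ε : Fin k → ℝ) : Matrix (Fin k) (Fin k) ℝ :=
  Matrix.of fun i j => if j = π i then ε i else 0

private lemma sgnPerm_mulVec {k : ℕ} (π : Equiv.Perm (Fin k)) (ε : Fin k → ℝ)
    (v : Fin k → ℝ) : (sgnPerm π ε).mulVec v = fun i => ε i * v (π i) := by
  funext i
  simp only [sgnPerm, Matrix.mulVec, dotProduct, Matrix.of_apply]
  rw [Finset.sum_eq_single (π i)] <;> simp +contextual

private lemma sgnPerm_mem {k : ℕ} (π : Equiv.Perm (Fin k)) (ε : Fin k → ℝ)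
    (hε : ∀ i, ε i = 1 ∨ ε i = -1) :
    sgnPerm π ε ∈ Matrix.orthogonalGroup (Fin k) ℝ := by
  rw [Matrix.mem_orthogonalGroup_iff]
  ext i j
  simp only [Matrix.mul_apply, sgnPerm, Matrix.star_apply, Matrix.transpose_apply, star_trivial,
    Matrix.of_apply, Matrix.one_apply, star_eq_conjTranspose, Matrix.conjTranspose_apply]
  rw [Finset.sum_eq_single (π i)]
  · by_cases h : i = j
    · subst h; simp; rcases hε i with h | h <;> rw [h] <;> norm_num
    · have : ¬ (π i = π j) := fun hc => h (π.injective hc)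
      simp [h, this]
  · intro p _ hp; simp [hp, Ne.symm hp]
  · simp

private lemma keyT {k : ℕ} (a b c d : Fin k → ℝ) (hab : a ≠ 0 ∨ b ≠ 0) (hcd : c ≠ 0 ∨ d ≠ 0) :
    ∃ T ∈ Matrix.orthogonalGroup (Fin k) ℝ,
      (∑ l, (T.mulVec a l * c l + T.mulVec b l * d l)) ≠ 0 ∨
      (∑ l, (T.mulVec a l * d l - T.mulVec b l * c l)) ≠ 0 := by
  by_contra hcon
  push_neg at hcon
  have key : ∀ l m : Fin k, (a m * c l + b m * d l = 0) ∧ (a m * d l - b m * c l = 0) := by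
    intro l m
    set π := Equiv.swap l m with hπ
    have hπl : π l = m := Equiv.swap_apply_left l m
    have h1 := hcon (sgnPerm π 1) (sgnPerm_mem π 1 (fun i => Or.inl rfl))
    have h2 := hcon (sgnPerm π (fun p => if p = l then -1 else 1))
      (sgnPerm_mem _ _ (by intro i; by_cases hi : i = l <;> simp [hi]))
    rw [sgnPerm_mulVec, sgnPerm_mulVec] at h1 h2
    simp only [Pi.one_apply, one_mul] at h1 h2
    constructor
    · have e1 := h1.1; have e2 := h2.1
      have hsum : ∑ p, ((a (π p) * c p + b (π p) * d p) -
          ((if p = l then (-1:ℝ) else 1) * a (π p) * c p +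
           (if p = l then (-1:ℝ) else 1) * b (π p) * d p))
          = 2 * (a m * c l + b m * d l) := by
        rw [Finset.sum_eq_single l]
        · simp [hπl]; ring
        · intro p _ hp; simp [hp]
        · simp
      rw [Finset.sum_sub_distrib] at hsum
      simp only [mul_assoc] at hsum e2
      rw [e1, e2] at hsum
      linarith
    · have e1 := h1.2; have e2 := h2.2
      have hsum : ∑ p, ((a (π p) * d p - b (π p) * c p) -
          ((if p = l then (-1:ℝ) else 1) * a (π p) * d p -
           (if p = l then (-1:ℝ) else 1) * b (π p) * c p))
          = 2 * (a m * d l - b m * c l) := by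
        rw [Finset.sum_eq_single l]
        · simp [hπl]; ring
        · intro p _ hp; simp [hp]
        · simp
      rw [Finset.sum_sub_distrib] at hsum
      simp only [mul_assoc] at hsum e2
      rw [e1, e2] at hsum
      linarith
  have hm : ∃ m, a m ≠ 0 ∨ b m ≠ 0 := by
    rcases hab with h | h
    · rcases Function.ne_iff.mp h with ⟨m, hm⟩; exact ⟨m, Or.inl hm⟩
    · rcases Function.ne_iff.mp h with ⟨m, hm⟩; exact ⟨m, Or.inr hm⟩
  obtain ⟨m, hm⟩ := hm
  have habm : a m ^ 2 + b m ^ 2 > 0 := by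
    rcases hm with h | h <;> positivity
  have hc0 : ∀ l, c l = 0 := by
    intro l
    obtain ⟨k1, k2⟩ := key l m
    have h2 : (a m ^ 2 + b m ^ 2) * c l
        = a m * (a m * c l + b m * d l) - b m * (a m * d l - b m * c l) := by ring
    rw [k1, k2] at h2
    simpa using (mul_eq_zero.mp (by linarith : (a m ^ 2 + b m ^ 2) * c l = 0)).resolve_left
      (ne_of_gt habm)
  have hd0 : ∀ l, d l = 0 := by
    intro l
    obtain ⟨k1, k2⟩ := key l m
    have h2 : (a m ^ 2 + b m ^ 2) * d l
        = b m * (a m * c l + b m * d l) + a m * (a m * d l - b m * c l) := by ring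
    rw [k1, k2] at h2
    simpa using (mul_eq_zero.mp (by linarith : (a m ^ 2 + b m ^ 2) * d l = 0)).resolve_left
      (ne_of_gt habm)
  rcases hcd with h | h
  · exact h (funext hc0)
  · exact h (funext hd0)

private lemma expand2 {k : ℕ} (P : (Fin 2 → ℝ) →ₗ[ℝ] (Fin 2 → ℝ) →ₗ[ℝ] (Fin k → ℝ))
    (ζ η : Fin 2 → ℝ) :
    P ζ η = (ζ 0 * η 0) • P (Pi.single 0 1) (Pi.single 0 1)
      + (ζ 0 * η 1) • P (Pi.single 0 1) (Pi.single 1 1)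
      + (ζ 1 * η 0) • P (Pi.single 1 1) (Pi.single 0 1)
      + (ζ 1 * η 1) • P (Pi.single 1 1) (Pi.single 1 1) := by
  have hζ : ζ = ζ 0 • (Pi.single 0 1 : Fin 2 → ℝ) + ζ 1 • (Pi.single 1 1 : Fin 2 → ℝ) := by
    funext i; fin_cases i <;> simp
  have hη : η = η 0 • (Pi.single 0 1 : Fin 2 → ℝ) + η 1 • (Pi.single 1 1 : Fin 2 → ℝ) := by
    funext i; fin_cases i <;> simp
  conv_lhs => rw [hζ, hη]
  simp only [map_add, _root_.map_smul, LinearMap.add_apply, LinearMap.smul_apply, smul_smul]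
  module

private lemma nzpair {k : ℕ} (P : (Fin 2 → ℝ) →ₗ[ℝ] (Fin 2 → ℝ) →ₗ[ℝ] (Fin k → ℝ))
    (hsymm : ∀ ζ η : Fin 2 → ℝ, P ζ η = P η ζ)
    (htr : P (Pi.single 0 1) (Pi.single 0 1) + P (Pi.single 1 1) (Pi.single 1 1) = 0)
    (h0 : P ≠ 0) :
    P (Pi.single 0 1) (Pi.single 0 1) ≠ 0 ∨ P (Pi.single 0 1) (Pi.single 1 1) ≠ 0 := by
  by_contra hcon
  push_neg at hcon
  obtain ⟨ha, hb⟩ := hcon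
  apply h0
  have h11 : P (Pi.single 1 1) (Pi.single 1 1) = 0 := by
    rw [ha] at htr; simpa using htr
  have h10 : P (Pi.single 1 1) (Pi.single 0 1) = 0 := by
    rw [hsymm]; exact hb
  apply LinearMap.ext; intro ζ; apply LinearMap.ext; intro η
  rw [LinearMap.zero_apply, LinearMap.zero_apply, expand2 P ζ η, ha, hb, h10, h11]
  simp


private lemma rotStar (p q : ℝ) : star !![p, -q; q, p] = !![p, q; -q, p] := by
  rw [Matrix.star_eq_conjTranspose]
  rw [Matrix.eta_fin_two (!![p, -q; q, p]ᴴ)]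
  simp

private lemma rotMul (p q : ℝ) (hpq : p ^ 2 + q ^ 2 = 1) :
    !![p, -q; q, p] * !![p, q; -q, p] = 1 := by
  rw [Matrix.mul_fin_two, Matrix.one_fin_two]
  ext i j
  fin_cases i <;> fin_cases j <;> simp <;> nlinarith [hpq]

private lemma rotMul' (p q : ℝ) (hpq : p ^ 2 + q ^ 2 = 1) :
    !![p, q; -q, p] * !![p, -q; q, p] = 1 := by
  rw [Matrix.mul_fin_two, Matrix.one_fin_two]
  ext i j
  fin_cases i <;> fin_cases j <;> simp <;> nlinarith [hpq]

private lemma rotMem (p q : ℝ) (hpq : p ^ 2 + q ^ 2 = 1) :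
    !![p, -q; q, p] ∈ Matrix.orthogonalGroup (Fin 2) ℝ := by
  have hT : (!![p, -q; q, p])ᵀ = !![p, q; -q, p] := by
    ext i j; fin_cases i <;> fin_cases j <;> simp
  rw [Matrix.mem_orthogonalGroup_iff, hT, rotMul p q hpq]

private lemma rotInv (p q : ℝ) (hpq : p ^ 2 + q ^ 2 = 1) :
    (!![p, -q; q, p])⁻¹ = !![p, q; -q, p] :=
  Matrix.inv_eq_left_inv (rotMul' p q hpq)

private lemma rotDet (p q : ℝ) (hpq : p ^ 2 + q ^ 2 = 1) : (!![p, -q; q, p]).det = 1 := by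
  rw [Matrix.det_fin_two_of]; nlinarith [hpq]

end aux

set_option maxHeartbeats 1000000 in
theorem stmt_15 (k : ℕ) (hk : 1 ≤ k)
    (P Q : (Fin 2 → ℝ) →ₗ[ℝ] (Fin 2 → ℝ) →ₗ[ℝ] (Fin k → ℝ))
    (hPsymm : ∀ ζ η : Fin 2 → ℝ, P ζ η = P η ζ)
    (hQsymm : ∀ ζ η : Fin 2 → ℝ, Q ζ η = Q η ζ)
    (hPtr : P (Pi.single 0 1) (Pi.single 0 1) + P (Pi.single 1 1) (Pi.single 1 1) = 0)
    (hQtr : Q (Pi.single 0 1) (Pi.single 0 1) + Q (Pi.single 1 1) (Pi.single 1 1) = 0)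
    (hP0 : P ≠ 0) (hQ0 : Q ≠ 0) :
    ∃ S : Matrix (Fin 2) (Fin 2) ℝ, ∃ T : Matrix (Fin k) (Fin k) ℝ,
      S ∈ Matrix.orthogonalGroup (Fin 2) ℝ ∧ S.det = 1 ∧
      T ∈ Matrix.orthogonalGroup (Fin k) ℝ ∧
      0 < ∑ i : Fin 2, ∑ j : Fin 2, ∑ l : Fin k,
        T.mulVec (P (S⁻¹.mulVec (Pi.single i 1)) (S⁻¹.mulVec (Pi.single j 1))) l *
          Q (Pi.single i 1) (Pi.single j 1) l := by
  set a := P (Pi.single 0 1) (Pi.single 0 1) with ha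
  set b := P (Pi.single 0 1) (Pi.single 1 1) with hb
  set c := Q (Pi.single 0 1) (Pi.single 0 1) with hc
  set d := Q (Pi.single 0 1) (Pi.single 1 1) with hd
  have hPa : P (Pi.single 1 1) (Pi.single 1 1) = -a := by
    rw [ha]; linear_combination hPtr
  have hQc : Q (Pi.single 1 1) (Pi.single 1 1) = -c := by
    rw [hc]; linear_combination hQtr
  have hPb : P (Pi.single 1 1) (Pi.single 0 1) = b := (hPsymm _ _).symm
  have hQd : Q (Pi.single 1 1) (Pi.single 0 1) = d := (hQsymm _ _).symm
  obtain ⟨T, hT, hTne⟩ := keyT a b c d (nzpair P hPsymm hPtr hP0) (nzpair Q hQsymm hQtr hQ0)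
  set F := ∑ l, (T.mulVec a l * c l + T.mulVec b l * d l) with hF
  set G := ∑ l, (T.mulVec a l * d l - T.mulVec b l * c l) with hG
  have hFG : 0 < F ^ 2 + G ^ 2 := by rcases hTne with h | h <;> positivity
  set r := Real.sqrt (F ^ 2 + G ^ 2) with hr
  have hrpos : 0 < r := Real.sqrt_pos.mpr hFG
  set z : ℂ := ⟨F, G⟩ with hz
  have hz0 : z ≠ 0 := by
    intro hc0
    rw [Complex.ext_iff] at hc0
    simp [hz] at hc0
    rcases hTne with h | h
    · exact h hc0.1
    · exact h hc0.2
  have habs : ‖z‖ = r := by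
    rw [Complex.norm_def, Complex.normSq_mk, hr]; ring_nf
  set θ := z.arg / 2 with hθ
  set p := Real.cos θ with hp
  set q := Real.sin θ with hq
  have hpq : p ^ 2 + q ^ 2 = 1 := by rw [hp, hq]; exact Real.cos_sq_add_sin_sq θ
  have hC : p ^ 2 - q ^ 2 = F / r := by
    have h2θ : 2 * θ = z.arg := by rw [hθ]; ring
    have := Complex.cos_arg hz0
    rw [← h2θ, Real.cos_two_mul'] at this
    rw [hp, hq, ← habs]
    simpa using this
  have hS2 : 2 * p * q = G / r := by
    have h2θ : 2 * θ = z.arg := by rw [hθ]; ring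
    have h3 := Complex.sin_arg z
    rw [← h2θ, Real.sin_two_mul] at h3
    have him : z.im = G := rfl
    rw [him, habs] at h3
    rw [hp, hq]
    linear_combination h3
  set S : Matrix (Fin 2) (Fin 2) ℝ := !![p, -q; q, p] with hS
  have hSorth : S ∈ Matrix.orthogonalGroup (Fin 2) ℝ := rotMem p q hpq
  have hSdet : S.det = 1 := rotDet p q hpq
  have hSinv : S⁻¹ = !![p, q; -q, p] := rotInv p q hpq
  have hv00 : S⁻¹.mulVec (Pi.single 0 1) 0 = p := by
    rw [hSinv]; simp [Matrix.mulVec, dotProduct, Fin.sum_univ_two]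
  have hv01 : S⁻¹.mulVec (Pi.single 0 1) 1 = -q := by
    rw [hSinv]; simp [Matrix.mulVec, dotProduct, Fin.sum_univ_two]
  have hv10 : S⁻¹.mulVec (Pi.single 1 1) 0 = q := by
    rw [hSinv]; simp [Matrix.mulVec, dotProduct, Fin.sum_univ_two]
  have hv11 : S⁻¹.mulVec (Pi.single 1 1) 1 = p := by
    rw [hSinv]; simp [Matrix.mulVec, dotProduct, Fin.sum_univ_two]
  have hP00 : P (S⁻¹.mulVec (Pi.single 0 1)) (S⁻¹.mulVec (Pi.single 0 1))
      = (p ^ 2 - q ^ 2) • a - (2 * p * q) • b := by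
    rw [expand2 P, hv00, hv01, ← ha, ← hb, hPb, hPa]; module
  have hP01 : P (S⁻¹.mulVec (Pi.single 0 1)) (S⁻¹.mulVec (Pi.single 1 1))
      = (2 * p * q) • a + (p ^ 2 - q ^ 2) • b := by
    rw [expand2 P, hv00, hv01, hv10, hv11, ← ha, ← hb, hPb, hPa]; module
  have hP10 : P (S⁻¹.mulVec (Pi.single 1 1)) (S⁻¹.mulVec (Pi.single 0 1))
      = (2 * p * q) • a + (p ^ 2 - q ^ 2) • b := by
    rw [expand2 P, hv00, hv01, hv10, hv11, ← ha, ← hb, hPb, hPa]; module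
  have hP11 : P (S⁻¹.mulVec (Pi.single 1 1)) (S⁻¹.mulVec (Pi.single 1 1))
      = -((p ^ 2 - q ^ 2) • a - (2 * p * q) • b) := by
    rw [expand2 P, hv10, hv11, ← ha, ← hb, hPb, hPa]; module
  refine ⟨S, T, hSorth, hSdet, hT, ?_⟩
  simp only [Fin.sum_univ_two, hP00, hP01, hP10, hP11, ← hc, ← hd, hQc, hQd,
    Matrix.mulVec_add, Matrix.mulVec_sub, Matrix.mulVec_smul, Matrix.mulVec_neg,
    Pi.add_apply, Pi.sub_apply, Pi.smul_apply, Pi.neg_apply, smul_eq_mul]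
  have hcomb : ∀ w x y v : ℝ, w + x + (y + v) = w + (x + y) + v := by intro w x y v; ring
  rw [← Finset.sum_add_distrib, ← Finset.sum_add_distrib, ← Finset.sum_add_distrib]
  have htot : ∑ l, (((p ^ 2 - q ^ 2) * T.mulVec a l - 2 * p * q * T.mulVec b l) * c l +
        (2 * p * q * T.mulVec a l + (p ^ 2 - q ^ 2) * T.mulVec b l) * d l +
        ((2 * p * q * T.mulVec a l + (p ^ 2 - q ^ 2) * T.mulVec b l) * d l +
          -((p ^ 2 - q ^ 2) * T.mulVec a l - 2 * p * q * T.mulVec b l) * -c l))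
      = 2 * ((p ^ 2 - q ^ 2) * F + (2 * p * q) * G) := by
    rw [hF, hG, Finset.mul_sum, Finset.mul_sum, ← Finset.sum_add_distrib, Finset.mul_sum]
    apply Finset.sum_congr rfl
    intro l _
    ring
  rw [htot, hC, hS2]
  have : F / r * F + G / r * G = (F ^ 2 + G ^ 2) / r := by ring
  rw [this]
  positivity
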